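/- Let Γ be the set of cycles C_e, one for each edge e = {B1, B2} of B joining two boxes of the same level, where C_e = (B1, B', B2, B1) if parent(B1) = parent(B2) = B', and C_e = (B1, parent(B1), parent(B2), B2, B1) otherwise. Then Γ generates the cycle space of B over GF(2), i.e. the edge set of every subgraph of B in which all vertices have even degree is a symmetric difference of the edge sets of members of Γ; moreover, the vertex set of every member of Γ induces a clique in G^+. -/

import Mathlib

open Filter Set
open scoped ENNReal NNReal Topology

noncomputable section

def torusDist {d : ℕ} (L : ℝ) (x y : Fin d → ℝ) : ℝ :=
  ⨆ k : Fin d, ⨅ m : ℤ, |x k - y k - m * L|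

lemma torusDist_symm {d : ℕ} (L : ℝ) (x y : Fin d → ℝ) :
    torusDist L x y = torusDist L y x := by
  unfold torusDist
  refine iSup_congr fun k => ?_
  rw [← sInf_range, ← sInf_range]
  congr 1
  ext r
  simp only [Set.mem_range]
  constructor
  · rintro ⟨m, rfl⟩
    refine ⟨-m, ?_⟩
    have h : y k - x k - ((-m : ℤ) : ℝ) * L = -(x k - y k - (m : ℤ) * L) := by
      push_cast; ring
    rw [h, abs_neg]
  · rintro ⟨m, rfl⟩
    refine ⟨-m, ?_⟩
    have h : x k - y k - ((-m : ℤ) : ℝ) * L = -(y k - x k - (m : ℤ) * L) := by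
      push_cast; ring
    rw [h, abs_neg]

def girgGraph {d : ℕ} (L : ℝ) {V : Type*} (pos : V → Fin d → ℝ) (wt : V → ℝ) :
    SimpleGraph V where
  Adj u v := u ≠ v ∧ torusDist L (pos u) (pos v) ^ d ≤ wt u * wt v
  symm := by
    refine ⟨?_⟩
    intro u v h
    exact ⟨h.1.symm, by rw [torusDist_symm, mul_comm]; exact h.2⟩
  loopless := ⟨fun u h => h.1 rfl⟩

/-- `wLow d i = 2^{d i / 2}`, the lower end of the weight range of a level-`i` box. -/
def wLow (d i : ℕ) : ℝ := (2 : ℝ) ^ ((d : ℝ) * i / 2)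

/-- A box of the tessellation: a level `0 ≤ level ≤ k0` together with the coordinates of
its geometric cell.  Boxes of level `< k0` are the usual boxes and the unique box of level
`k0` is the top box. -/
@[ext]
structure Box (d k0 : ℕ) where
  level : ℕ
  idx : Fin d → ℕ
  level_le : level ≤ k0
  idx_pos : ∀ k, 1 ≤ idx k
  idx_le : ∀ k, idx k ≤ 2 ^ (k0 - level)

instance (d k0 : ℕ) : Finite (Box d k0) := by
  apply Finite.of_injective (fun B : Box d k0 =>
    ((⟨B.level, Nat.lt_succ_of_le B.level_le⟩ : Fin (k0 + 1)),
      fun k => (⟨B.idx k, Nat.lt_succ_of_le ((B.idx_le k).trans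
        (Nat.pow_le_pow_right (by norm_num) (Nat.sub_le k0 B.level)))⟩ : Fin (2 ^ k0 + 1))))
  intro B1 B2 h
  simp only [Prod.mk.injEq, Fin.mk.injEq, funext_iff] at h
  exact Box.ext h.1 (funext fun k => by simpa using h.2 k)

/-- The region of the augmented space `V_w = T × [1, ∞)` occupied by a box. -/
def boxSet (d k0 : ℕ) (D0 : ℝ) (B : Box d k0) : Set ((Fin d → ℝ) × ℝ) :=
  {p | (∀ k, 2 ^ B.level * ((B.idx k : ℝ) - 1) * D0 ≤ p.1 k ∧
          p.1 k < 2 ^ B.level * (B.idx k : ℝ) * D0) ∧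
       wLow d B.level ≤ p.2 ∧ (B.level < k0 → p.2 < wLow d (B.level + 1))}

/-- Translation of an augmented point by an integer multiple of the torus period in
each geometric coordinate. -/
def torusShift {d : ℕ} (L : ℝ) (v : Fin d → ℤ) (p : (Fin d → ℝ) × ℝ) : (Fin d → ℝ) × ℝ :=
  (fun k => p.1 k + (v k : ℝ) * L, p.2)

/-- The closures of `S1` and `S2` intersect (as subsets of the torus, i.e. up to integer
translations of the geometric coordinates) in a set of Hausdorff dimension at least `δ`. -/
def meetsDim {d : ℕ} (L : ℝ) (δ : ℕ) (S1 S2 : Set ((Fin d → ℝ) × ℝ)) : Prop :=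
  ∃ v w : Fin d → ℤ,
    (δ : ℝ≥0∞) ≤ dimH (torusShift L v '' closure S1 ∩ torusShift L w '' closure S2)

/-- The closures of `S1` and `S2` intersect (as subsets of the torus). -/
def meets {d : ℕ} (L : ℝ) (S1 S2 : Set ((Fin d → ℝ) × ℝ)) : Prop :=
  ∃ v w : Fin d → ℤ,
    (torusShift L v '' closure S1 ∩ torusShift L w '' closure S2).Nonempty

/-- The graph `𝓑` on boxes: two boxes are adjacent iff their closures intersect in a
`d`-dimensional set. -/
def boxGraph (d k0 : ℕ) (D0 L : ℝ) : SimpleGraph (Box d k0) where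
  Adj B1 B2 := B1 ≠ B2 ∧ meetsDim L d (boxSet d k0 D0 B1) (boxSet d k0 D0 B2)
  symm := by
    refine ⟨?_⟩
    rintro B1 B2 ⟨h1, v, w, h⟩
    exact ⟨h1.symm, w, v, by rwa [Set.inter_comm]⟩
  loopless := ⟨fun B h => h.1 rfl⟩

/-- The graph `𝓖⁺` on boxes: two boxes are adjacent iff their closures intersect. -/
def gPlusGraph (d k0 : ℕ) (D0 L : ℝ) : SimpleGraph (Box d k0) where
  Adj B1 B2 := B1 ≠ B2 ∧ meets L (boxSet d k0 D0 B1) (boxSet d k0 D0 B2)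
  symm := by
    refine ⟨?_⟩
    rintro B1 B2 ⟨h1, v, w, h⟩
    exact ⟨h1.symm, w, v, by rwa [Set.inter_comm]⟩
  loopless := ⟨fun B h => h.1 rfl⟩

/-- The parent of a box: the box of the next level directly above it (the unique box of
minimum volume whose geometric projection strictly contains that of the given box).
The top box is its own parent. -/
def parentBox {d k0 : ℕ} (B : Box d k0) : Box d k0 :=
  if h : B.level < k0 then
    { level := B.level + 1
      idx := fun k => (B.idx k + 1) / 2
      level_le := h
      idx_pos := fun k => by
        have := B.idx_pos k
        show 1 ≤ (B.idx k + 1) / 2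
        omega
      idx_le := fun k => by
        have h1 := B.idx_le k
        have h2 : k0 - B.level = (k0 - (B.level + 1)) + 1 := by omega
        rw [h2, pow_succ] at h1
        show (B.idx k + 1) / 2 ≤ 2 ^ (k0 - (B.level + 1))
        omega }
  else B

lemma parentBox_level_le {d k0 : ℕ} (B : Box d k0) : B.level ≤ (parentBox B).level := by
  unfold parentBox
  split <;> simp

/-- The spanning tree `T_𝓑` of `𝓑`, given by the parent edges. -/
def treeGraph (d k0 : ℕ) : SimpleGraph (Box d k0) where
  Adj B1 B2 := B1 ≠ B2 ∧ (parentBox B1 = B2 ∨ parentBox B2 = B1)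
  symm := by
    refine ⟨?_⟩
    rintro B1 B2 ⟨h1, h2⟩
    exact ⟨h1.symm, h2.symm⟩
  loopless := ⟨fun B h => h.1 rfl⟩

/-- The subgraph of `G` induced by a set `R` (kept on the ambient vertex type). -/
def onSet {V : Type*} (G : SimpleGraph V) (R : Set V) : SimpleGraph V where
  Adj a b := a ∈ R ∧ b ∈ R ∧ G.Adj a b
  symm := ⟨fun _ _ h => ⟨h.2.1, h.1, h.2.2.symm⟩⟩
  loopless := ⟨fun a h => G.loopless.irrefl a h.2.2⟩

section Generic

variable {α : Type*}

/-- `m`-fold ancestor with respect to a parent function. -/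
def ancF (par : α → α) (B : α) (m : ℕ) : α := par^[m] B

/-- Number of steps from `B1` to the lowest common ancestor of `B1` and `B2`. -/
def lcaStepsF (par : α → α) (B1 B2 : α) : ℕ :=
  sInf {m | ∃ m', ancF par B2 m' = ancF par B1 m}

/-- Number of steps from `B2` to the lowest common ancestor of `B1` and `B2`. -/
def lcaStepsF' (par : α → α) (B1 B2 : α) : ℕ :=
  sInf {m | ancF par B2 m = ancF par B1 (lcaStepsF par B1 B2)}

/-- The canonical path `L(B1, B2)`: the unique path between `B1` and `B2` in the spanning
tree given by the parent edges, i.e. the two upward paths to the lowest common ancestor. -/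
def canonPathF (par : α → α) (B1 B2 : α) : Set α :=
  {A | ∃ m ≤ lcaStepsF par B1 B2, ancF par B1 m = A} ∪
    {A | ∃ m ≤ lcaStepsF' par B1 B2, ancF par B2 m = A}

/-- `L'(B1, B2)`: the canonical path together with everything `G⁺`-adjacent to it. -/
def extPathF (par : α → α) (Gp : SimpleGraph α) (B1 B2 : α) : Set α :=
  canonPathF par B1 B2 ∪ {B | ∃ B' ∈ canonPathF par B1 B2, Gp.Adj B B'}

/-- `W(B1, B2)`: `L'(B1, B2)` together with all connected components of inactive elements
(in `G⁺`) meeting `L'(B1, B2)`. -/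
def WsetF (par : α → α) (Gp : SimpleGraph α) (act : α → Prop) (B1 B2 : α) : Set α :=
  extPathF par Gp B1 B2 ∪
    {B | ¬ act B ∧ ∃ B' ∈ extPathF par Gp B1 B2, ¬ act B' ∧
      (onSet Gp {C | ¬ act C}).Reachable B' B}

/-- `S(B1, B2)`: the elements outside `W(B1, B2)` that are `G⁺`-adjacent to it
(they are automatically active). -/
def SsetF (par : α → α) (Gp : SimpleGraph α) (act : α → Prop) (B1 B2 : α) : Set α :=
  {B | B ∉ WsetF par Gp act B1 B2 ∧ ∃ B' ∈ WsetF par Gp act B1 B2, Gp.Adj B B'}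

/-- The boundary of `C` visible from `x`: elements `G⁺`-adjacent to `C` that are connected
to `x` in `𝓑` with `C` removed. -/
def visBoundaryF (Gb Gp : SimpleGraph α) (C : Set α) (x : α) : Set α :=
  {B' | (∃ B'' ∈ C, Gp.Adj B' B'') ∧ (onSet Gb Cᶜ).Reachable x B'}

end Generic

/-- A box is active if it contains the augmented point of at least one vertex. -/
def isActive (d k0 : ℕ) (D0 : ℝ) {V : Type*} (pos : V → Fin d → ℝ) (wt : V → ℝ)
    (B : Box d k0) : Prop :=
  ∃ u, (pos u, wt u) ∈ boxSet d k0 D0 B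

end

open Classical in
/-- The characteristic vector over `GF(2)` of a set of (potential) edges. -/
noncomputable def chi {α : Type*} (E : Set α) : α → ZMod 2 :=
  fun e => if e ∈ E then 1 else 0

/-- The generating set `Γ`: for each edge `e = {B1, B2}` of `𝓑` joining two boxes of the
same level, the cycle `(B1, B', B2)` if the parents coincide (`B' = parent B1 = parent B2`),
and the cycle `(B1, parent B1, parent B2, B2)` otherwise. -/
def gammaSet (d k0 : ℕ) (D0 L : ℝ) : Set (Set (Sym2 (Box d k0))) :=
  {E | ∃ B1 B2 : Box d k0, (boxGraph d k0 D0 L).Adj B1 B2 ∧ B1.level = B2.level ∧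
    ((parentBox B1 = parentBox B2 ∧
        E = {s(B1, parentBox B1), s(parentBox B1, B2), s(B2, B1)}) ∨
     (parentBox B1 ≠ parentBox B2 ∧
        E = {s(B1, parentBox B1), s(parentBox B1, parentBox B2),
             s(parentBox B2, B2), s(B2, B1)}))}
namespace S5

open Set

variable {d k0 : ℕ} {D0 L : ℝ}

lemma wLow_pos (d i : ℕ) : 0 < wLow d i := Real.rpow_pos_of_pos two_pos _

lemma wLow_le {i j : ℕ} (hij : i ≤ j) : wLow d i ≤ wLow d j := by
  apply Real.rpow_le_rpow_of_exponent_le one_le_two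
  have : (i : ℝ) ≤ j := by exact_mod_cast hij
  have hd0 : (0:ℝ) ≤ d := Nat.cast_nonneg d
  nlinarith

lemma wLow_lt (hd : 1 ≤ d) {i j : ℕ} (hij : i < j) : wLow d i < wLow d j := by
  apply Real.rpow_lt_rpow_of_exponent_lt one_lt_two
  have h1 : (i : ℝ) < j := by exact_mod_cast hij
  have hd0 : (1:ℝ) ≤ d := by exact_mod_cast hd
  nlinarith

lemma wLow_succ (d i : ℕ) : wLow d (i + 1) = 2 ^ ((d:ℝ)/2) * wLow d i := by
  unfold wLow
  rw [← Real.rpow_add two_pos]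
  congr 1
  push_cast
  ring

/-- lower endpoint of a box in coordinate `k` -/
def lo (D0 : ℝ) {d k0 : ℕ} (B : Box d k0) (k : Fin d) : ℝ :=
  2 ^ B.level * ((B.idx k : ℝ) - 1) * D0

def hi (D0 : ℝ) {d k0 : ℕ} (B : Box d k0) (k : Fin d) : ℝ :=
  2 ^ B.level * (B.idx k : ℝ) * D0

lemma lo_lt_hi (hD0 : 0 < D0) (B : Box d k0) (k : Fin d) : lo D0 B k < hi D0 B k := by
  unfold lo hi
  have h1 : (0:ℝ) < 2 ^ B.level := by positivity
  nlinarith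

def cwSet (d k0 : ℕ) (B : Box d k0) : Set ℝ :=
  if B.level < k0 then Icc (wLow d B.level) (wLow d (B.level+1)) else Ici (wLow d B.level)

lemma boxSet_eq (B : Box d k0) :
    boxSet d k0 D0 B =
      (univ.pi fun k => Ico (lo D0 B k) (hi D0 B k)) ×ˢ
        (if B.level < k0 then Ico (wLow d B.level) (wLow d (B.level+1))
         else Ici (wLow d B.level)) := by
  ext p
  simp only [boxSet, mem_setOf_eq, mem_prod, Set.mem_pi, mem_univ, forall_true_left, mem_Ico,
    mem_Ici, lo, hi]
  by_cases h : B.level < k0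
  · simp only [if_pos h]
    constructor
    · rintro ⟨h1, h2, h3⟩; exact ⟨fun k => h1 k, h2, h3 h⟩
    · rintro ⟨h1, h2, h3⟩; exact ⟨fun k => h1 k, h2, fun _ => h3⟩
  · simp only [if_neg h]
    constructor
    · rintro ⟨h1, h2, _⟩; exact ⟨fun k => h1 k, h2⟩
    · rintro ⟨h1, h2⟩; exact ⟨fun k => h1 k, h2, fun hh => absurd hh h⟩

lemma closure_boxSet (hd : 1 ≤ d) (hD0 : 0 < D0) (B : Box d k0) :
    closure (boxSet d k0 D0 B) =
      (univ.pi fun k => Icc (lo D0 B k) (hi D0 B k)) ×ˢ cwSet d k0 B := by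
  rw [boxSet_eq]
  unfold cwSet
  by_cases h : B.level < k0
  · rw [if_pos h, if_pos h, closure_prod_eq, closure_pi_set,
      closure_Ico (wLow_lt hd (Nat.lt_succ_self _)).ne]
    congr 1
    exact Set.pi_congr rfl fun k _ => closure_Ico (lo_lt_hi hD0 B k).ne
  · rw [if_neg h, if_neg h, closure_prod_eq, closure_pi_set, closure_Ici]
    congr 1
    exact Set.pi_congr rfl fun k _ => closure_Ico (lo_lt_hi hD0 B k).ne

lemma mem_shiftcl (hd : 1 ≤ d) (hD0 : 0 < D0) (B : Box d k0) (v : Fin d → ℤ)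
    (p : (Fin d → ℝ) × ℝ) :
    p ∈ torusShift L v '' closure (boxSet d k0 D0 B) ↔
      (∀ k, lo D0 B k + v k * L ≤ p.1 k ∧ p.1 k ≤ hi D0 B k + v k * L) ∧
      (wLow d B.level ≤ p.2 ∧ (B.level < k0 → p.2 ≤ wLow d (B.level + 1))) := by
  rw [closure_boxSet hd hD0]
  constructor
  · rintro ⟨q, ⟨hq1, hq2⟩, rfl⟩
    refine ⟨fun k => ?_, ?_⟩
    · have h' := hq1 k (mem_univ k)
      rw [mem_Icc] at h'
      simp only [torusShift]
      constructor <;> linarith [h'.1, h'.2]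
    · unfold cwSet at hq2
      simp only [torusShift]
      split_ifs at hq2 with h
      · exact ⟨hq2.1, fun _ => hq2.2⟩
      · exact ⟨hq2, fun hlt => absurd hlt h⟩
  · rintro ⟨h1, h2⟩
    refine ⟨(fun k => p.1 k - v k * L, p.2), ⟨?_, ?_⟩, ?_⟩
    · intro k _
      rw [mem_Icc]
      dsimp only
      exact ⟨by linarith [(h1 k).1], by linarith [(h1 k).2]⟩
    · unfold cwSet
      split_ifs with h
      · exact ⟨h2.1, h2.2 h⟩
      · exact h2.1
    · simp only [torusShift]
      ext k
      · simp
      · rfl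

lemma parentBox_level {B : Box d k0} (h : B.level < k0) : (parentBox B).level = B.level + 1 := by
  unfold parentBox; rw [dif_pos h]

lemma parentBox_idx {B : Box d k0} (h : B.level < k0) (k : Fin d) :
    (parentBox B).idx k = (B.idx k + 1) / 2 := by
  unfold parentBox; rw [dif_pos h]

lemma parentBox_of_top {B : Box d k0} (h : ¬ B.level < k0) : parentBox B = B := dif_neg h

lemma top_unique {B1 B2 : Box d k0} (h1 : B1.level = k0) (h2 : B2.level = k0) : B1 = B2 := by
  apply Box.ext (h1.trans h2.symm)
  funext k
  have a1 := B1.idx_le k; have a2 := B1.idx_pos k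
  have b1 := B2.idx_le k; have b2 := B2.idx_pos k
  rw [h1, Nat.sub_self, pow_zero] at a1
  rw [h2, Nat.sub_self, pow_zero] at b1
  omega

lemma level_lt_of_ne {B1 B2 : Box d k0} (hne : B1 ≠ B2) (hlev : B1.level = B2.level) :
    B1.level < k0 := by
  rcases lt_or_eq_of_le B1.level_le with h | h
  · exact h
  · exact absurd (top_unique h (hlev ▸ h)) hne

lemma ne_parentBox {B : Box d k0} (h : B.level < k0) : B ≠ parentBox B := by
  intro he
  have := parentBox_level h
  rw [← he] at this
  omega

lemma parent_bounds (hD0 : 0 < D0) {B : Box d k0} (h : B.level < k0) (k : Fin d) :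
    lo D0 (parentBox B) k ≤ lo D0 B k ∧ hi D0 B k ≤ hi D0 (parentBox B) k := by
  unfold lo hi
  rw [parentBox_level h, parentBox_idx h]
  have hj := B.idx_pos k
  set j := B.idx k with hjdef
  have h1 : j ≤ 2 * ((j+1)/2) := by omega
  have h2 : 2 * ((j+1)/2) ≤ j + 1 := by omega
  have c1 : ((2 * ((j+1)/2) : ℕ) : ℝ) ≤ (j:ℝ) + 1 := by exact_mod_cast h2
  have c2 : (j : ℝ) ≤ ((2 * ((j+1)/2) : ℕ) : ℝ) := by exact_mod_cast h1
  have hp : (0:ℝ) < 2 ^ B.level := by positivity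
  push_cast at c1 c2
  rw [pow_succ]
  have f1 : (0:ℝ) ≤ 2 ^ B.level * D0 * ((j:ℝ) + 1 - 2 * ((((j+1)/2 : ℕ)):ℝ)) :=
    mul_nonneg (mul_nonneg hp.le hD0.le) (by linarith)
  have f2 : (0:ℝ) ≤ 2 ^ B.level * D0 * (2 * ((((j+1)/2 : ℕ)):ℝ) - (j:ℝ)) :=
    mul_nonneg (mul_nonneg hp.le hD0.le) (by linarith)
  constructor
  · nlinarith [f1]
  · nlinarith [f2]

lemma nat_le_of_cast_le {a b : ℕ} (h : (a : ℝ≥0∞) ≤ (b : ℝ≥0∞)) : a ≤ b := by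
  exact_mod_cast h

lemma dimH_le_hyperplane {d : ℕ} (k : Fin d) (c t : ℝ) {X : Set ((Fin d → ℝ) × ℝ)}
    (hX : ∀ p ∈ X, p.1 k = c ∧ p.2 = t) : dimH X ≤ ((d - 1 : ℕ) : ℝ≥0∞) := by
  classical
  set g : ({j : Fin d // ¬ j = k} → ℝ) → (Fin d → ℝ) × ℝ :=
    fun z => (fun j => if h : j = k then c else z ⟨j, h⟩, t) with hg_def
  have hg : LipschitzWith 1 g := by
    apply LipschitzWith.of_dist_le_mul
    intro x y
    rw [NNReal.coe_one, one_mul, Prod.dist_eq]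
    apply max_le
    · rw [dist_pi_le_iff dist_nonneg]
      intro b
      by_cases hb : b = k
      · simp [hg_def, hb, dist_nonneg]
      · simp only [hg_def, dif_neg hb]
        exact dist_le_pi_dist x y ⟨b, hb⟩
    · simp [hg_def, dist_nonneg]
  have hsub : X ⊆ Set.range g := by
    intro p hp
    obtain ⟨h1, h2⟩ := hX p hp
    refine ⟨fun j => p.1 j.1, ?_⟩
    refine Prod.ext ?_ (by simp [hg_def, h2])
    funext j
    by_cases hj : j = k
    · subst hj; simp [hg_def, h1]
    · simp [hg_def, dif_neg hj, hj]
  have hcard : Fintype.card {j : Fin d // ¬ j = k} = d - 1 := by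
    rw [Fintype.card_subtype_compl, Fintype.card_subtype_eq, Fintype.card_fin]
  calc dimH X ≤ dimH (Set.range g) := dimH_mono hsub
    _ = dimH (g '' univ) := by rw [image_univ]
    _ ≤ dimH (univ : Set ({j : Fin d // ¬ j = k} → ℝ)) := hg.dimH_image_le _
    _ = ((d - 1 : ℕ) : ℝ≥0∞) := by rw [Real.dimH_univ_pi, hcard]

lemma meetsDim_symm {S1 S2 : Set ((Fin d → ℝ) × ℝ)} (h : meetsDim L d S1 S2) :
    meetsDim L d S2 S1 := by
  obtain ⟨v, w, hh⟩ := h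
  exact ⟨w, v, by rwa [Set.inter_comm]⟩

lemma not_far (hd : 1 ≤ d) (hD0 : 0 < D0) {B1 B2 : Box d k0}
    (h : meetsDim L d (boxSet d k0 D0 B1) (boxSet d k0 D0 B2))
    (hlt : B1.level + 1 < B2.level) : False := by
  obtain ⟨v, w, hdim⟩ := h
  have h1 : B1.level < k0 := by have := B2.level_le; omega
  have hemp : (torusShift L v '' closure (boxSet d k0 D0 B1) ∩
      torusShift L w '' closure (boxSet d k0 D0 B2)) = ∅ := by
    rw [eq_empty_iff_forall_notMem]
    rintro p ⟨hp1, hp2⟩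
    rw [mem_shiftcl hd hD0] at hp1 hp2
    have a1 := hp1.2.2 h1
    have a2 := hp2.2.1
    have a3 := wLow_lt hd hlt
    linarith
  rw [hemp, dimH_empty] at hdim
  have hz : (d : ℝ≥0∞) = 0 := le_zero_iff.mp hdim
  have : d = 0 := by exact_mod_cast hz
  omega

lemma parent_of_meets (hd : 1 ≤ d) (hD0 : 0 < D0) (hL : L = D0 * 2 ^ k0) {B1 B2 : Box d k0}
    (h : meetsDim L d (boxSet d k0 D0 B1) (boxSet d k0 D0 B2))
    (hlev : B2.level = B1.level + 1) : parentBox B1 = B2 := by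
  obtain ⟨v, w, hdim⟩ := h
  have hl1 : B1.level < k0 := by have := B2.level_le; omega
  set l := B1.level with hl
  set s : ℝ := 2 ^ l * D0 with hs
  have hspos : 0 < s := by positivity
  set E : ℤ := 2 ^ (k0 - l) with hE
  have hEpos : (0:ℤ) < E := by positivity
  have hpowsplit : (2:ℝ) ^ k0 = 2 ^ l * 2 ^ (k0 - l) := (pow_mul_pow_sub 2 B1.level_le).symm
  set α : Fin d → ℤ := fun k => (B1.idx k : ℤ) - 1 + v k * E with hα
  set β : Fin d → ℤ := fun k => 2 * ((B2.idx k : ℤ) - 1) + w k * E with hβ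
  have clo1 : ∀ k, lo D0 B1 k + v k * L = s * α k := by
    intro k
    rw [hL, hα, hs]
    unfold lo
    push_cast [hE]
    rw [hpowsplit]
    ring
  have chi1 : ∀ k, hi D0 B1 k + v k * L = s * (α k + 1) := by
    intro k
    rw [hL, hα, hs]
    unfold hi
    push_cast [hE]
    rw [hpowsplit]
    ring
  have clo2 : ∀ k, lo D0 B2 k + w k * L = s * β k := by
    intro k
    rw [hL, hβ, hs]
    unfold lo
    rw [hlev]
    push_cast [hE]
    rw [hpowsplit, pow_succ]
    ring
  have chi2 : ∀ k, hi D0 B2 k + w k * L = s * (β k + 2) := by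
    intro k
    rw [hL, hβ, hs]
    unfold hi
    rw [hlev]
    push_cast [hE]
    rw [hpowsplit, pow_succ]
    ring
  by_cases hall : ∀ k, β k ≤ α k ∧ α k ≤ β k + 1
  · refine Box.ext ?_ ?_
    · rw [parentBox_level hl1, hlev]
    · funext k
      rw [parentBox_idx hl1]
      obtain ⟨ha, hb⟩ := hall k
      have hj1 : 1 ≤ B1.idx k := B1.idx_pos k
      have hj1' : B1.idx k ≤ 2 ^ (k0 - l) := B1.idx_le k
      have hj2 : 1 ≤ B2.idx k := B2.idx_pos k
      have hj2' : B2.idx k ≤ 2 ^ (k0 - l - 1) := by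
        have := B2.idx_le k
        rwa [hlev, show k0 - (l + 1) = k0 - l - 1 from rfl] at this
      set t : ℤ := v k - w k with ht
      have hEE : E = 2 * 2 ^ (k0 - l - 1) := by
        have h9 : (2:ℤ) ^ (k0 - l) = 2 ^ ((k0 - l - 1) + 1) := by
          congr 1
          omega
        rw [hE, h9, pow_succ]
        ring
      have hE'pos : (0:ℤ) < 2 ^ (k0 - l - 1) := by positivity
      have hj1c : ((B1.idx k : ℤ)) ≤ E := by
        rw [hE]; exact_mod_cast hj1'
      have hj2c : ((B2.idx k : ℤ)) ≤ 2 ^ (k0 - l - 1) := by exact_mod_cast hj2'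
      have hj1cp : (1:ℤ) ≤ (B1.idx k : ℤ) := by exact_mod_cast hj1
      have hj2cp : (1:ℤ) ≤ (B2.idx k : ℤ) := by exact_mod_cast hj2
      simp only [hα, hβ] at ha hb
      have hab1 : 2 * (B2.idx k : ℤ) - 1 ≤ (B1.idx k : ℤ) + t * E := by
        have : t * E = v k * E - w k * E := by ring
        omega
      have hab2 : (B1.idx k : ℤ) + t * E ≤ 2 * (B2.idx k : ℤ) := by
        have : t * E = v k * E - w k * E := by ring
        omega
      have htz : t = 0 := by
        rcases lt_trichotomy t 0 with hc | hc | hc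
        · exfalso
          have h1 : t ≤ -1 := by omega
          have h2 : t * E ≤ -E := by nlinarith [hEpos]
          linarith [hab1, hj1c, hj2cp]
        · exact hc
        · exfalso
          have h1 : 1 ≤ t := by omega
          have h2 : E ≤ t * E := by nlinarith [hEpos]
          linarith [hab2, hj1cp, hj2c, hEE]
      rw [htz, zero_mul, add_zero] at hab1 hab2
      have hab1' : 2 * (B2.idx k : ℤ) ≤ (B1.idx k : ℤ) + 1 := by omega
      have n1 : 2 * B2.idx k ≤ B1.idx k + 1 := by exact_mod_cast hab1'
      have n2 : B1.idx k ≤ 2 * B2.idx k := by exact_mod_cast hab2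
      omega
  · exfalso
    push_neg at hall
    obtain ⟨k, hk⟩ := hall
    have hsub : ∀ p ∈ (torusShift L v '' closure (boxSet d k0 D0 B1) ∩
        torusShift L w '' closure (boxSet d k0 D0 B2)),
        p.1 k = (if α k < β k then s * β k else s * α k) ∧ p.2 = wLow d (l + 1) := by
      rintro p ⟨hp1, hp2⟩
      rw [mem_shiftcl hd hD0] at hp1 hp2
      constructor
      · have b1 := (hp1.1 k).1; have b2 := (hp1.1 k).2
        have b3 := (hp2.1 k).1; have b4 := (hp2.1 k).2
        rw [clo1 k] at b1; rw [chi1 k] at b2; rw [clo2 k] at b3; rw [chi2 k] at b4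
        by_cases hc : α k < β k
        · rw [if_pos hc]
          have : (α k : ℝ) + 1 ≤ (β k : ℝ) := by exact_mod_cast hc
          have : s * (α k + 1) ≤ s * β k := by nlinarith
          linarith
        · rw [if_neg hc]
          have hc2 : β k + 2 ≤ α k := by omega
          have : (β k : ℝ) + 2 ≤ (α k : ℝ) := by exact_mod_cast hc2
          have : s * (β k + 2) ≤ s * α k := by nlinarith
          linarith
      · have a1 := hp1.2.2 hl1
        have a2 := hp2.2.1
        rw [hlev] at a2
        linarith
    have hle := dimH_le_hyperplane k _ _ hsub
    have : (d : ℝ≥0∞) ≤ ((d - 1 : ℕ) : ℝ≥0∞) := le_trans hdim hle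
    have := nat_le_of_cast_le this
    omega
lemma adj_classify (hd : 1 ≤ d) (hD0 : 0 < D0) (hL : L = D0 * 2 ^ k0) {B1 B2 : Box d k0}
    (hadj : (boxGraph d k0 D0 L).Adj B1 B2) :
    B1.level = B2.level ∨ parentBox B1 = B2 ∨ parentBox B2 = B1 := by
  obtain ⟨hne, hm⟩ : B1 ≠ B2 ∧ meetsDim L d (boxSet d k0 D0 B1) (boxSet d k0 D0 B2) := hadj
  rcases lt_trichotomy B1.level B2.level with h | h | h
  · rcases eq_or_lt_of_le (Nat.succ_le_of_lt h) with h' | h'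
    · exact Or.inr (Or.inl (parent_of_meets hd hD0 hL hm h'.symm))
    · exact absurd (not_far hd hD0 hm h') not_false
  · exact Or.inl h
  · rcases eq_or_lt_of_le (Nat.succ_le_of_lt h) with h' | h'
    · exact Or.inr (Or.inr (parent_of_meets hd hD0 hL (meetsDim_symm hm) h'.symm))
    · exact absurd (not_far hd hD0 (meetsDim_symm hm) h') not_false

lemma rp_one_le (d : ℕ) : (1:ℝ) ≤ 2 ^ ((d:ℝ)/2) := by
  have := Real.rpow_le_rpow_of_exponent_le one_le_two
    (show (0:ℝ) ≤ (d:ℝ)/2 by positivity)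
  rwa [Real.rpow_zero] at this

lemma parent_adj (hd : 1 ≤ d) (hD0 : 0 < D0) (hL : L = D0 * 2 ^ k0) {B1 B2 : Box d k0}
    (hadj : (boxGraph d k0 D0 L).Adj B1 B2) (hlev : B1.level = B2.level)
    (hpar : parentBox B1 ≠ parentBox B2) :
    (boxGraph d k0 D0 L).Adj (parentBox B1) (parentBox B2) ∧
      (parentBox B1).level = (parentBox B2).level := by
  obtain ⟨hne, v, w, hdim⟩ : B1 ≠ B2 ∧ meetsDim L d (boxSet d k0 D0 B1) (boxSet d k0 D0 B2) := hadj
  have hl1 : B1.level < k0 := level_lt_of_ne hne hlev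
  have hl2 : B2.level < k0 := hlev ▸ hl1
  refine ⟨(show parentBox B1 ≠ parentBox B2 ∧ meetsDim L d (boxSet d k0 D0 (parentBox B1))
      (boxSet d k0 D0 (parentBox B2)) from ⟨hpar, v, w, ?_⟩), by rw [parentBox_level hl1, parentBox_level hl2, hlev]⟩
  set r : ℝ := 2 ^ ((d:ℝ)/2) with hr
  have hr1 : 1 ≤ r := rp_one_le d
  have hr0 : 0 < r := lt_of_lt_of_le one_pos hr1
  set Φ : (Fin d → ℝ) × ℝ → (Fin d → ℝ) × ℝ := fun p => (p.1, r * p.2) with hΦ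
  set Ψ : (Fin d → ℝ) × ℝ → (Fin d → ℝ) × ℝ := fun p => (p.1, p.2 / r) with hΨ
  have hΨlip : LipschitzWith 1 Ψ := by
    apply LipschitzWith.of_dist_le_mul
    intro p q
    have h2 : dist (p.2 / r) (q.2 / r) ≤ dist p.2 q.2 := by
      rw [Real.dist_eq, Real.dist_eq, div_sub_div_same, abs_div, abs_of_pos hr0]
      exact div_le_self (abs_nonneg _) hr1
    rw [NNReal.coe_one, one_mul]
    calc dist (Ψ p) (Ψ q) = max (dist p.1 q.1) (dist (p.2/r) (q.2/r)) := by
          rw [hΨ]; exact Prod.dist_eq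
      _ ≤ max (dist p.1 q.1) (dist p.2 q.2) := max_le_max (le_refl _) h2
      _ = dist p q := Prod.dist_eq.symm
  have hid : ∀ p : (Fin d → ℝ) × ℝ, Ψ (Φ p) = p := by
    intro p
    rw [hΦ, hΨ]
    simp only
    rw [mul_div_cancel_left₀ _ (ne_of_gt hr0)]
  set X := (torusShift L v '' closure (boxSet d k0 D0 B1)) ∩
    (torusShift L w '' closure (boxSet d k0 D0 B2)) with hX
  have hsub : Φ '' X ⊆ (torusShift L v '' closure (boxSet d k0 D0 (parentBox B1))) ∩
      (torusShift L w '' closure (boxSet d k0 D0 (parentBox B2))) := by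
    rintro _ ⟨p, ⟨hp1, hp2⟩, rfl⟩
    rw [mem_shiftcl hd hD0] at hp1 hp2
    have key : ∀ (B : Box d k0) (u : Fin d → ℤ), B.level = B1.level →
        ((∀ k, lo D0 B k + u k * L ≤ p.1 k ∧ p.1 k ≤ hi D0 B k + u k * L) ∧
          (wLow d B.level ≤ p.2 ∧ (B.level < k0 → p.2 ≤ wLow d (B.level + 1)))) →
        Φ p ∈ torusShift L u '' closure (boxSet d k0 D0 (parentBox B)) := by
      intro B u hBlev hp
      have hBl : B.level < k0 := by rw [hBlev]; exact hl1
      rw [mem_shiftcl hd hD0]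
      refine ⟨fun k => ?_, ?_, ?_⟩
      · have hb := parent_bounds hD0 hBl k
        have := hp.1 k
        exact ⟨by simp only [hΦ]; linarith [hb.1, this.1],
               by simp only [hΦ]; linarith [hb.2, this.2]⟩
      · rw [parentBox_level hBl]
        have h1 : wLow d (B.level + 1) = r * wLow d B.level := by
          rw [wLow_succ, hr]
        have := hp.2.1
        simp only [hΦ]
        rw [h1]
        have := wLow_pos d B.level
        nlinarith
      · intro hpk
        rw [parentBox_level hBl] at hpk ⊢
        have h2 : wLow d (B.level + 1 + 1) = r * wLow d (B.level + 1) := by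
          rw [wLow_succ, hr]
        have := hp.2.2 hBl
        simp only [hΦ]
        rw [h2]
        have := wLow_pos d (B.level + 1)
        nlinarith
    exact ⟨key B1 v rfl hp1, key B2 w hlev.symm hp2⟩
  calc ((d:ℕ) : ℝ≥0∞) ≤ dimH X := hdim
    _ = dimH (Ψ '' (Φ '' X)) := by
        rw [image_image]
        congr 1
        rw [show (fun p => Ψ (Φ p)) = id from funext hid, image_id]
    _ ≤ dimH (Φ '' X) := hΨlip.dimH_image_le _
    _ ≤ _ := dimH_mono hsub

lemma gamma_clique (hd : 1 ≤ d) (hD0 : 0 < D0) (hL : L = D0 * 2 ^ k0)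
    {E : Set (Sym2 (Box d k0))} (hE : E ∈ gammaSet d k0 D0 L) :
    ∀ a b : Box d k0, (∃ e ∈ E, a ∈ e) → (∃ e ∈ E, b ∈ e) → a ≠ b →
      (gPlusGraph d k0 D0 L).Adj a b := by
  obtain ⟨B1, B2, hadj, hlev, hcase⟩ := hE
  obtain ⟨hne, v, w, hdim⟩ : B1 ≠ B2 ∧ meetsDim L d (boxSet d k0 D0 B1) (boxSet d k0 D0 B2) := hadj
  have hl1 : B1.level < k0 := level_lt_of_ne hne hlev
  have hl2 : B2.level < k0 := hlev ▸ hl1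
  have hX : ((torusShift L v '' closure (boxSet d k0 D0 B1)) ∩
      (torusShift L w '' closure (boxSet d k0 D0 B2))).Nonempty := by
    rw [Set.nonempty_iff_ne_empty]
    intro hemp
    rw [hemp, dimH_empty] at hdim
    have hz : (d : ℝ≥0∞) = 0 := le_zero_iff.mp hdim
    have : d = 0 := by exact_mod_cast hz
    omega
  obtain ⟨q, hq1, hq2⟩ := hX
  rw [mem_shiftcl hd hD0] at hq1 hq2
  set pt : (Fin d → ℝ) × ℝ := (q.1, wLow d (B1.level + 1)) with hpt
  have m1 : pt ∈ torusShift L v '' closure (boxSet d k0 D0 B1) := by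
    rw [mem_shiftcl hd hD0]
    rw [hpt]
    exact ⟨hq1.1, wLow_le (Nat.le_succ _), fun _ => le_refl _⟩
  have m2 : pt ∈ torusShift L w '' closure (boxSet d k0 D0 B2) := by
    rw [mem_shiftcl hd hD0]
    rw [hpt]
    refine ⟨hq2.1, ?_, fun _ => ?_⟩
    · rw [← hlev]
      exact wLow_le (Nat.le_succ _)
    · rw [← hlev]
  have m1p : pt ∈ torusShift L v '' closure (boxSet d k0 D0 (parentBox B1)) := by
    rw [mem_shiftcl hd hD0]
    rw [hpt]
    refine ⟨fun k => ?_, ?_, ?_⟩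
    · have hb := parent_bounds hD0 hl1 k
      have := hq1.1 k
      exact ⟨by linarith [hb.1, this.1], by linarith [hb.2, this.2]⟩
    · rw [parentBox_level hl1]
    · intro h
      rw [parentBox_level hl1]
      exact wLow_le (Nat.le_succ _)
  have m2p : pt ∈ torusShift L w '' closure (boxSet d k0 D0 (parentBox B2)) := by
    rw [mem_shiftcl hd hD0]
    rw [hpt]
    refine ⟨fun k => ?_, ?_, ?_⟩
    · have hb := parent_bounds hD0 hl2 k
      have := hq2.1 k
      exact ⟨by linarith [hb.1, this.1], by linarith [hb.2, this.2]⟩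
    · rw [parentBox_level hl2, ← hlev]
    · intro h
      rw [parentBox_level hl2, ← hlev]
      exact wLow_le (Nat.le_succ _)
  have key : ∀ a : Box d k0, a = B1 ∨ a = B2 ∨ a = parentBox B1 ∨ a = parentBox B2 →
      ∃ u : Fin d → ℤ, pt ∈ torusShift L u '' closure (boxSet d k0 D0 a) := by
    rintro a (rfl | rfl | rfl | rfl)
    exacts [⟨v, m1⟩, ⟨w, m2⟩, ⟨v, m1p⟩, ⟨w, m2p⟩]
  have hv : ∀ c : Box d k0, (∃ e ∈ E, c ∈ e) →
      c = B1 ∨ c = B2 ∨ c = parentBox B1 ∨ c = parentBox B2 := by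
    rintro c ⟨e, he, hce⟩
    rcases hcase with ⟨hp, rfl⟩ | ⟨hp, rfl⟩ <;>
      simp only [Set.mem_insert_iff, Set.mem_singleton_iff] at he <;>
      rcases he with rfl | rfl | rfl | rfl <;>
      rw [Sym2.mem_iff] at hce <;>
      tauto
  intro a b ha hb hab
  obtain ⟨ua, hua⟩ := key a (hv a ha)
  obtain ⟨ub, hub⟩ := key b (hv b hb)
  exact (show a ≠ b ∧ meets L (boxSet d k0 D0 a) (boxSet d k0 D0 b) from ⟨hab, ua, ub, ⟨pt, hua, hub⟩⟩)

open Classical in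
lemma chi_singleton {α : Type*} (x e : α) : chi ({x} : Set α) e = if e = x then 1 else 0 := by
  simp only [chi, Set.mem_singleton_iff]

lemma chi_insert {α : Type*} {x : α} {S : Set α} (hx : x ∉ S) :
    chi (insert x S) = chi {x} + chi S := by
  classical
  funext e
  simp only [chi, Pi.add_apply, Set.mem_insert_iff, Set.mem_singleton_iff]
  by_cases h1 : e = x
  · subst h1
    rw [if_pos (Or.inl rfl), if_pos rfl, if_neg hx, add_zero]
  · by_cases h2 : e ∈ S
    · rw [if_pos (Or.inr h2), if_neg h1, if_pos h2, zero_add]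
    · rw [if_neg (by rintro (h | h) <;> [exact h1 h; exact h2 h]), if_neg h1, if_neg h2,
        add_zero]

lemma chi_three {α : Type*} {x y z : α} (hxy : x ≠ y) (hxz : x ≠ z) (hyz : y ≠ z) :
    chi ({x, y, z} : Set α) = chi {x} + chi {y} + chi {z} := by
  have m1 : x ∉ ({y, z} : Set α) := by
    simp only [Set.mem_insert_iff, Set.mem_singleton_iff]
    rintro (h | h)
    exacts [hxy h, hxz h]
  have m2 : y ∉ ({z} : Set α) := by simpa using hyz
  rw [show ({x, y, z} : Set α) = insert x (insert y {z}) from rfl,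
    chi_insert m1, chi_insert m2, add_assoc]

lemma chi_four {α : Type*} {x y z w : α} (hxy : x ≠ y) (hxz : x ≠ z) (hxw : x ≠ w)
    (hyz : y ≠ z) (hyw : y ≠ w) (hzw : z ≠ w) :
    chi ({x, y, z, w} : Set α) = chi {x} + chi {y} + chi {z} + chi {w} := by
  have m1 : x ∉ ({y, z, w} : Set α) := by
    simp only [Set.mem_insert_iff, Set.mem_singleton_iff]
    rintro (h | h | h)
    exacts [hxy h, hxz h, hxw h]
  have m2 : y ∉ ({z, w} : Set α) := by
    simp only [Set.mem_insert_iff, Set.mem_singleton_iff]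
    rintro (h | h)
    exacts [hyz h, hyw h]
  have m3 : z ∉ ({w} : Set α) := by simpa using hzw
  rw [show ({x, y, z, w} : Set α) = insert x (insert y (insert z {w})) from rfl,
    chi_insert m1, chi_insert m2, chi_insert m3, add_assoc, add_assoc]

/-- The sum of indicator vectors of the tree edges on the path from `B` to the top box. -/
noncomputable def pathChi (d k0 : ℕ) (B : Box d k0) : Sym2 (Box d k0) → ZMod 2 :=
  ∑ i ∈ Finset.range (k0 - B.level),
    chi {s(ancF parentBox B i, ancF parentBox B (i + 1))}

lemma anc_level {B : Box d k0} : ∀ i : ℕ, i ≤ k0 - B.level →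
    (ancF parentBox B i).level = B.level + i := by
  intro i
  induction i with
  | zero => intro _; rfl
  | succ i ihi =>
    intro hi
    have h1 : (ancF parentBox B i).level = B.level + i := ihi (by omega)
    have h2 : (ancF parentBox B i).level < k0 := by
      have := B.level_le
      omega
    show (parentBox^[i+1] B).level = B.level + (i + 1)
    rw [Function.iterate_succ_apply']
    have h3 : (parentBox (parentBox^[i] B)).level = (parentBox^[i] B).level + 1 :=
      parentBox_level h2
    rw [h3]
    rw [show parentBox^[i] B = ancF parentBox B i from rfl, h1]
    omega

lemma pathChi_top {B : Box d k0} (h : ¬ B.level < k0) : pathChi d k0 B = 0 := by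
  unfold pathChi
  have : k0 - B.level = 0 := by omega
  rw [this, Finset.range_zero, Finset.sum_empty]

lemma pathChi_eq {B : Box d k0} (h : B.level < k0) :
    pathChi d k0 B = chi {s(B, parentBox B)} + pathChi d k0 (parentBox B) := by
  have h1 : k0 - B.level = (k0 - (parentBox B).level) + 1 := by
    rw [parentBox_level h]
    omega
  have hP : pathChi d k0 (parentBox B) = ∑ i ∈ Finset.range (k0 - (parentBox B).level),
      chi {s(ancF parentBox B (i + 1), ancF parentBox B (i + 1 + 1))} := by
    unfold pathChi
    apply Finset.sum_congr rfl
    intro i _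
    have e2 : ancF parentBox (parentBox B) i = ancF parentBox B (i + 1) :=
      (Function.iterate_succ_apply parentBox i B).symm
    have e3 : ancF parentBox (parentBox B) (i + 1) = ancF parentBox B (i + 1 + 1) :=
      (Function.iterate_succ_apply parentBox (i + 1) B).symm
    rw [e2, e3]
  rw [hP]
  unfold pathChi
  rw [h1, Finset.sum_range_succ', add_comm]
  have e0 : ancF parentBox B 0 = B := rfl
  have e1 : ancF parentBox B (0 + 1) = parentBox B := rfl
  rw [e0, e1]

lemma pathChi_apply_ne {B : Box d k0} {e : Sym2 (Box d k0)}
    (he : ∀ C : Box d k0, C.level < k0 → e ≠ s(C, parentBox C)) : pathChi d k0 B e = 0 := by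
  unfold pathChi
  rw [Finset.sum_apply]
  apply Finset.sum_eq_zero
  intro i hi
  rw [Finset.mem_range] at hi
  rw [chi_singleton, if_neg]
  have hlev : (ancF parentBox B i).level = B.level + i := anc_level i (by omega)
  have hlt : (ancF parentBox B i).level < k0 := by
    have := B.level_le
    omega
  have hanc : ancF parentBox B (i + 1) = parentBox (ancF parentBox B i) := by
    show parentBox^[i+1] B = _
    rw [Function.iterate_succ_apply']
    rfl
  rw [hanc]
  exact he _ hlt

open Classical in
/-- The boundary (mod 2 vertex degree) linear map. -/
noncomputable def bndL (d k0 : ℕ) [Fintype (Box d k0)] :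
    (Sym2 (Box d k0) → ZMod 2) →ₗ[ZMod 2] (Box d k0 → ZMod 2) where
  toFun f := fun v => ∑ u : Box d k0, if u = v then 0 else f s(v, u)
  map_add' f g := by
    funext v
    simp only [Pi.add_apply]
    rw [← Finset.sum_add_distrib]
    apply Finset.sum_congr rfl
    intro u _
    split_ifs
    · rw [add_zero]
    · rfl
  map_smul' c f := by
    funext v
    simp only [Pi.smul_apply, RingHom.id_apply, smul_eq_mul]
    rw [Finset.mul_sum]
    apply Finset.sum_congr rfl
    intro u _
    split_ifs
    · rw [mul_zero]
    · rfl

open Classical in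
lemma bndL_apply [Fintype (Box d k0)] (f : Sym2 (Box d k0) → ZMod 2) (v : Box d k0) :
    bndL d k0 f v = ∑ u : Box d k0, if u = v then 0 else f s(v, u) := rfl

open Classical in
lemma bnd_single [Fintype (Box d k0)] {a b : Box d k0} (hab : a ≠ b) (v : Box d k0) :
    bndL d k0 (chi {s(a, b)}) v = (if v = a then 1 else 0) + (if v = b then 1 else 0) := by
  rw [bndL_apply]
  have hsum : ∀ u : Box d k0, (if u = v then 0 else chi {s(a, b)} s(v, u)) =
      (if v = a ∧ u = b then 1 else 0) + (if v = b ∧ u = a then 1 else 0) := by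
    intro u
    rcases eq_or_ne u v with rfl | h1
    · rw [if_pos rfl, if_neg (by rintro ⟨rfl, rfl⟩; exact hab rfl),
        if_neg (by rintro ⟨rfl, rfl⟩; exact hab rfl), add_zero]
    · rw [if_neg h1, chi_singleton]
      simp only [Sym2.eq_iff]
      by_cases h2 : v = a ∧ u = b
      · rw [if_pos (Or.inl h2), if_pos h2,
          if_neg (fun h3 => hab (h2.1.symm.trans h3.1)), add_zero]
      · by_cases h3 : v = b ∧ u = a
        · rw [if_pos (Or.inr h3), if_neg h2, if_pos h3, zero_add]
        · rw [if_neg (by rintro (h | h) <;> [exact h2 h; exact h3 h]), if_neg h2, if_neg h3,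
            add_zero]
  rw [Finset.sum_congr rfl fun u _ => hsum u, Finset.sum_add_distrib]
  congr 1
  · by_cases hva : v = a
    · rw [if_pos hva]
      have h5 : ∀ u : Box d k0, (if v = a ∧ u = b then (1 : ZMod 2) else 0)
          = if u = b then 1 else 0 := by
        intro u
        by_cases hub : u = b
        · rw [if_pos ⟨hva, hub⟩, if_pos hub]
        · rw [if_neg (fun h => hub h.2), if_neg hub]
      rw [Finset.sum_congr rfl fun u _ => h5 u,
        Finset.sum_ite_eq' Finset.univ b fun _ => (1 : ZMod 2)]
      rw [if_pos (Finset.mem_univ b)]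
    · rw [if_neg hva]
      apply Finset.sum_eq_zero
      intro u _
      rw [if_neg (fun h => hva h.1)]
  · by_cases hvb : v = b
    · rw [if_pos hvb]
      have h5 : ∀ u : Box d k0, (if v = b ∧ u = a then (1 : ZMod 2) else 0)
          = if u = a then 1 else 0 := by
        intro u
        by_cases hua : u = a
        · rw [if_pos ⟨hvb, hua⟩, if_pos hua]
        · rw [if_neg (fun h => hua h.2), if_neg hua]
      rw [Finset.sum_congr rfl fun u _ => h5 u,
        Finset.sum_ite_eq' Finset.univ a fun _ => (1 : ZMod 2)]
      rw [if_pos (Finset.mem_univ a)]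
    · rw [if_neg hvb]
      apply Finset.sum_eq_zero
      intro u _
      rw [if_neg (fun h => hvb h.1)]

open Classical in
lemma bnd_pathChi [Fintype (Box d k0)] (n : ℕ) :
    ∀ B : Box d k0, k0 - B.level = n → ∀ v : Box d k0,
      bndL d k0 (pathChi d k0 B) v =
        (if v = B then 1 else 0) +
          (if v = ancF parentBox B (k0 - B.level) then 1 else 0) := by
  induction n with
  | zero =>
    intro B hn v
    have hB : ¬ B.level < k0 := by omega
    rw [pathChi_top hB, map_zero, hn]
    have e0 : ancF parentBox B 0 = B := rfl
    rw [e0]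
    show (0 : Box d k0 → ZMod 2) v = _
    rw [Pi.zero_apply]
    split_ifs <;> decide
  | succ n ihn =>
    intro B hn v
    have hB : B.level < k0 := by omega
    rw [pathChi_eq hB, map_add, Pi.add_apply,
      bnd_single (ne_parentBox hB) v,
      ihn (parentBox B) (by rw [parentBox_level hB]; omega) v]
    have htop : ancF parentBox (parentBox B) (k0 - (parentBox B).level)
        = ancF parentBox B (k0 - B.level) := by
      rw [parentBox_level hB, show k0 - B.level = n + 1 from hn]
      have h9 : k0 - (B.level + 1) = n := by omega
      rw [h9]
      exact (Function.iterate_succ_apply parentBox n B).symm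
    rw [htop]
    generalize (if v = B then (1:ZMod 2) else 0) = x
    generalize (if v = parentBox B then (1:ZMod 2) else 0) = y
    generalize (if v = ancF parentBox B (k0 - B.level) then (1:ZMod 2) else 0) = z
    revert x y z
    decide

lemma key_span (hd : 1 ≤ d) (hD0 : 0 < D0) (hL : L = D0 * 2 ^ k0) (m : ℕ) :
    ∀ B1 B2 : Box d k0, (boxGraph d k0 D0 L).Adj B1 B2 → B1.level = B2.level →
      k0 - B1.level ≤ m →
      chi {s(B1, B2)} + pathChi d k0 B1 + pathChi d k0 B2 ∈
        Submodule.span (ZMod 2) (chi '' gammaSet d k0 D0 L) := by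
  induction m with
  | zero =>
    intro B1 B2 hadj hlev hm
    have := level_lt_of_ne hadj.ne hlev
    omega
  | succ m ih =>
    intro B1 B2 hadj hlev hm
    have hne : B1 ≠ B2 := hadj.ne
    have hl1 : B1.level < k0 := level_lt_of_ne hne hlev
    have hl2 : B2.level < k0 := hlev ▸ hl1
    have hb1p1 : B1 ≠ parentBox B1 := ne_parentBox hl1
    have hb2p2 : B2 ≠ parentBox B2 := ne_parentBox hl2
    have hb1p2 : B1 ≠ parentBox B2 := by
      intro h
      have := parentBox_level hl2
      rw [← h] at this
      omega
    have hb2p1 : B2 ≠ parentBox B1 := by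
      intro h
      have := parentBox_level hl1
      rw [← h] at this
      omega
    by_cases hp : parentBox B1 = parentBox B2
    · have hmem : ({s(B1, parentBox B1), s(parentBox B1, B2), s(B2, B1)} :
          Set (Sym2 (Box d k0))) ∈ gammaSet d k0 D0 L :=
        ⟨B1, B2, hadj, hlev, Or.inl ⟨hp, rfl⟩⟩
      have hspan : chi {s(B1, parentBox B1), s(parentBox B1, B2), s(B2, B1)} ∈
          Submodule.span (ZMod 2) (chi '' gammaSet d k0 D0 L) :=
        Submodule.subset_span (Set.mem_image_of_mem chi hmem)
      have d1 : s(B1, parentBox B1) ≠ s(parentBox B1, B2) := by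
        intro hq
        rcases Sym2.eq_iff.mp hq with ⟨h1, h2⟩ | ⟨h1, h2⟩
        · exact hb1p1 h1
        · exact hne h1
      have d2 : s(B1, parentBox B1) ≠ s(B2, B1) := by
        intro hq
        rcases Sym2.eq_iff.mp hq with ⟨h1, h2⟩ | ⟨h1, h2⟩
        · exact hne h1
        · exact hb2p1 h2.symm
      have d3 : s(parentBox B1, B2) ≠ s(B2, B1) := by
        intro hq
        rcases Sym2.eq_iff.mp hq with ⟨h1, h2⟩ | ⟨h1, h2⟩
        · exact hb2p1 h1.symm
        · exact hb1p1 h1.symm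
      have hchi := chi_three d1 d2 d3
      have hgoal : chi {s(B1, B2)} + pathChi d k0 B1 + pathChi d k0 B2 =
          chi {s(B1, parentBox B1), s(parentBox B1, B2), s(B2, B1)} := by
        rw [hchi, pathChi_eq hl1, pathChi_eq hl2, ← hp]
        have e1 : s(parentBox B1, B2) = s(B2, parentBox B1) := Sym2.eq_swap
        have e2 : s(B2, B1) = s(B1, B2) := Sym2.eq_swap
        rw [e1, e2]
        funext e
        simp only [Pi.add_apply]
        generalize chi {s(B1, B2)} e = x1
        generalize chi {s(B1, parentBox B1)} e = x2
        generalize chi {s(B2, parentBox B1)} e = x3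
        generalize pathChi d k0 (parentBox B1) e = x4
        revert x1 x2 x3 x4
        decide
      rw [hgoal]
      exact hspan
    · obtain ⟨hadj', hlev'⟩ := parent_adj hd hD0 hL hadj hlev hp
      have hIH := ih (parentBox B1) (parentBox B2) hadj' hlev'
        (by rw [parentBox_level hl1]; omega)
      have hmem : ({s(B1, parentBox B1), s(parentBox B1, parentBox B2),
          s(parentBox B2, B2), s(B2, B1)} : Set (Sym2 (Box d k0))) ∈ gammaSet d k0 D0 L :=
        ⟨B1, B2, hadj, hlev, Or.inr ⟨hp, rfl⟩⟩
      have hspan : chi {s(B1, parentBox B1), s(parentBox B1, parentBox B2),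
          s(parentBox B2, B2), s(B2, B1)} ∈
          Submodule.span (ZMod 2) (chi '' gammaSet d k0 D0 L) :=
        Submodule.subset_span (Set.mem_image_of_mem chi hmem)
      have dxy : s(B1, parentBox B1) ≠ s(parentBox B1, parentBox B2) := by
        intro hq
        rcases Sym2.eq_iff.mp hq with ⟨h1, h2⟩ | ⟨h1, h2⟩
        · exact hb1p1 h1
        · exact hb1p2 h1
      have dxz : s(B1, parentBox B1) ≠ s(parentBox B2, B2) := by
        intro hq
        rcases Sym2.eq_iff.mp hq with ⟨h1, h2⟩ | ⟨h1, h2⟩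
        · exact hb1p2 h1
        · exact hne h1
      have dxw : s(B1, parentBox B1) ≠ s(B2, B1) := by
        intro hq
        rcases Sym2.eq_iff.mp hq with ⟨h1, h2⟩ | ⟨h1, h2⟩
        · exact hne h1
        · exact hb2p1 h2.symm
      have dyz : s(parentBox B1, parentBox B2) ≠ s(parentBox B2, B2) := by
        intro hq
        rcases Sym2.eq_iff.mp hq with ⟨h1, h2⟩ | ⟨h1, h2⟩
        · exact hp h1
        · exact hb2p1 h1.symm
      have dyw : s(parentBox B1, parentBox B2) ≠ s(B2, B1) := by
        intro hq
        rcases Sym2.eq_iff.mp hq with ⟨h1, h2⟩ | ⟨h1, h2⟩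
        · exact hb2p1 h1.symm
        · exact hb1p1 h1.symm
      have dzw : s(parentBox B2, B2) ≠ s(B2, B1) := by
        intro hq
        rcases Sym2.eq_iff.mp hq with ⟨h1, h2⟩ | ⟨h1, h2⟩
        · exact hb2p2 h1.symm
        · exact hb1p2 h1.symm
      have hchi := chi_four dxy dxz dxw dyz dyw dzw
      have hgoal : chi {s(B1, B2)} + pathChi d k0 B1 + pathChi d k0 B2 =
          chi {s(B1, parentBox B1), s(parentBox B1, parentBox B2),
            s(parentBox B2, B2), s(B2, B1)} +
          (chi {s(parentBox B1, parentBox B2)} + pathChi d k0 (parentBox B1) +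
            pathChi d k0 (parentBox B2)) := by
        rw [hchi, pathChi_eq hl1, pathChi_eq hl2]
        have e1 : s(parentBox B2, B2) = s(B2, parentBox B2) := Sym2.eq_swap
        have e2 : s(B2, B1) = s(B1, B2) := Sym2.eq_swap
        rw [e1, e2]
        funext e
        simp only [Pi.add_apply]
        generalize chi {s(B1, B2)} e = x1
        generalize chi {s(B1, parentBox B1)} e = x2
        generalize chi {s(B2, parentBox B2)} e = x3
        generalize chi {s(parentBox B1, parentBox B2)} e = x4
        generalize pathChi d k0 (parentBox B1) e = p1
        generalize pathChi d k0 (parentBox B2) e = p2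
        revert x1 x2 x3 x4 p1 p2
        decide
      rw [hgoal]
      exact Submodule.add_mem _ hspan hIH

lemma part1 (hd : 1 ≤ d) (hD0 : 0 < D0) (hL : L = D0 * 2 ^ k0)
    (H : SimpleGraph (Box d k0)) (hH : H ≤ boxGraph d k0 D0 L)
    (heven : ∀ v : Box d k0, Even {u | H.Adj v u}.ncard) :
    chi H.edgeSet ∈ Submodule.span (ZMod 2) (chi '' gammaSet d k0 D0 L) := by
  classical
  haveI : Fintype (Box d k0) := Fintype.ofFinite _
  set sameLev : Sym2 (Box d k0) → Prop :=
    Sym2.lift ⟨fun a b => a.level = b.level, fun a b => propext eq_comm⟩ with hsame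
  set SL : Finset (Sym2 (Box d k0)) :=
    Finset.univ.filter (fun s => s ∈ H.edgeSet ∧ sameLev s) with hSL
  set pSum : Sym2 (Box d k0) → (Sym2 (Box d k0) → ZMod 2) :=
    Sym2.lift ⟨fun a b => pathChi d k0 a + pathChi d k0 b, fun a b => add_comm _ _⟩ with hpSum
  set y : Sym2 (Box d k0) → (Sym2 (Box d k0) → ZMod 2) := fun s => chi {s} + pSum s with hy
  have hyspan : ∀ s ∈ SL, y s ∈ Submodule.span (ZMod 2) (chi '' gammaSet d k0 D0 L) := by
    intro s
    induction s using Sym2.inductionOn with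
    | hf a b =>
      intro hs
      rw [hSL, Finset.mem_filter] at hs
      obtain ⟨-, hmem, hlev⟩ := hs
      rw [SimpleGraph.mem_edgeSet] at hmem
      rw [hsame, Sym2.lift_mk] at hlev
      have hkey := key_span hd hD0 hL k0 a b (hH hmem) hlev (Nat.sub_le _ _)
      rw [hy, hpSum]
      show chi {s(a, b)} + Sym2.lift _ s(a, b) ∈ _
      rw [Sym2.lift_mk, ← add_assoc]
      exact hkey
  have hbndH : bndL d k0 (chi H.edgeSet) = 0 := by
    funext v
    rw [bndL_apply, Pi.zero_apply]
    have h1 : ∀ u : Box d k0, (if u = v then 0 else chi H.edgeSet s(v, u)) =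
        (if H.Adj v u then 1 else 0) := by
      intro u
      by_cases h2 : u = v
      · subst h2
        rw [if_pos rfl, if_neg (H.loopless.irrefl u)]
      · rw [if_neg h2]
        show (if s(v, u) ∈ H.edgeSet then (1 : ZMod 2) else 0) = _
        simp only [SimpleGraph.mem_edgeSet]
    rw [Finset.sum_congr rfl fun u _ => h1 u, Finset.sum_boole]
    have hcard : (Finset.univ.filter (fun u => H.Adj v u)).card = {u | H.Adj v u}.ncard := by
      rw [← Set.ncard_coe_finset]
      congr 1
      ext u
      simp
    obtain ⟨r, hr⟩ := heven v
    rw [hcard, hr, Nat.cast_add]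
    exact (by decide : ∀ x : ZMod 2, x + x = 0) _
  have hbndy : ∀ s ∈ SL, bndL d k0 (y s) = 0 := by
    intro s
    induction s using Sym2.inductionOn with
    | hf a b =>
      intro hs
      rw [hSL, Finset.mem_filter] at hs
      obtain ⟨-, hmem, hlev⟩ := hs
      rw [SimpleGraph.mem_edgeSet] at hmem
      rw [hsame, Sym2.lift_mk] at hlev
      have hab : a ≠ b := hmem.ne
      have hya : y s(a, b) = chi {s(a, b)} + (pathChi d k0 a + pathChi d k0 b) := by
        rw [hy, hpSum]
        show chi {s(a, b)} + Sym2.lift _ s(a, b) = _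
        rw [Sym2.lift_mk]
      funext v
      rw [hya, map_add, map_add, Pi.zero_apply, Pi.add_apply, Pi.add_apply,
        bnd_single hab v, bnd_pathChi (k0 - a.level) a rfl v,
        bnd_pathChi (k0 - b.level) b rfl v]
      have htopa : ancF parentBox a (k0 - a.level) = ancF parentBox b (k0 - b.level) := by
        apply top_unique
        · rw [anc_level (k0 - a.level) (le_refl _)]
          have := a.level_le
          omega
        · rw [anc_level (k0 - b.level) (le_refl _)]
          have := b.level_le
          omega
      rw [htopa]
      generalize (if v = a then (1:ZMod 2) else 0) = x1
      generalize (if v = b then (1:ZMod 2) else 0) = x2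
      generalize (if v = ancF parentBox b (k0 - b.level) then (1:ZMod 2) else 0) = x3
      revert x1 x2 x3
      decide
  set G : Sym2 (Box d k0) → ZMod 2 := chi H.edgeSet + ∑ s ∈ SL, y s with hG
  have hbndG : bndL d k0 G = 0 := by
    rw [hG, map_add, map_sum, hbndH,
      Finset.sum_congr rfl fun s hs => hbndy s hs, Finset.sum_const_zero, zero_add]
  have hsupp : ∀ e : Sym2 (Box d k0),
      (∀ C : Box d k0, C.level < k0 → e ≠ s(C, parentBox C)) → G e = 0 := by
    intro e
    induction e using Sym2.inductionOn with
    | hf a b =>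
      intro he
      rw [hG, Pi.add_apply, Finset.sum_apply]
      have hps : ∀ s : Sym2 (Box d k0), pSum s s(a, b) = 0 := by
        intro s
        induction s using Sym2.inductionOn with
        | hf c e' =>
          rw [hpSum, Sym2.lift_mk]
          show (pathChi d k0 c + pathChi d k0 e') s(a, b) = 0
          rw [Pi.add_apply, pathChi_apply_ne he, pathChi_apply_ne he, add_zero]
      have h1 : ∀ s ∈ SL, y s s(a, b) = chi {s} s(a, b) := by
        intro s _
        rw [hy]
        show (chi {s} + pSum s) s(a, b) = chi {s} s(a, b)
        rw [Pi.add_apply, hps s, add_zero]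
      rw [Finset.sum_congr rfl h1]
      have h3 : (∑ s ∈ SL, chi ({s} : Set (Sym2 (Box d k0))) s(a, b)) =
          if s(a, b) ∈ SL then 1 else 0 := by
        rw [Finset.sum_congr rfl fun s _ => chi_singleton s s(a, b)]
        by_cases hmem2 : s(a, b) ∈ SL
        · rw [if_pos hmem2, Finset.sum_eq_single s(a, b)]
          · rw [if_pos rfl]
          · intro u _ hu
            rw [if_neg (Ne.symm hu)]
          · intro h
            exact absurd hmem2 h
        · rw [if_neg hmem2]
          apply Finset.sum_eq_zero
          intro u hu
          rw [if_neg]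
          intro h
          exact hmem2 (by rw [h]; exact hu)
      rw [h3]
      by_cases h5 : s(a, b) ∈ H.edgeSet
      · have hadj : H.Adj a b := (SimpleGraph.mem_edgeSet H).mp h5
        have hBadj : (boxGraph d k0 D0 L).Adj a b := hH hadj
        have h6 : s(a, b) ∈ SL := by
          rcases adj_classify hd hD0 hL hBadj with hc | hc | hc
          · rw [hSL, Finset.mem_filter]
            refine ⟨Finset.mem_univ _, h5, ?_⟩
            rw [hsame, Sym2.lift_mk]
            exact hc
          · exfalso
            have hlt : a.level < k0 := by
              by_contra h7
              rw [parentBox_of_top h7] at hc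
              exact hadj.ne hc
            exact he a hlt (by rw [hc])
          · exfalso
            have hlt : b.level < k0 := by
              by_contra h7
              rw [parentBox_of_top h7] at hc
              exact hadj.ne' hc
            refine he b hlt ?_
            rw [hc]
            exact Sym2.eq_swap.symm
        rw [if_pos h6]
        have h7 : chi H.edgeSet s(a, b) = 1 := by
          show (if s(a, b) ∈ H.edgeSet then (1 : ZMod 2) else 0) = 1
          rw [if_pos h5]
        rw [h7]
        decide
      · have h8 : s(a, b) ∉ SL := by
          rw [hSL, Finset.mem_filter]
          rintro ⟨-, h9, -⟩
          exact h5 h9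
        rw [if_neg h8]
        have h7 : chi H.edgeSet s(a, b) = 0 := by
          show (if s(a, b) ∈ H.edgeSet then (1 : ZMod 2) else 0) = 0
          rw [if_neg h5]
        rw [h7, add_zero]
  have hzero : ∀ l : ℕ, ∀ C : Box d k0, C.level = l → C.level < k0 →
      G s(C, parentBox C) = 0 := by
    intro l
    induction l using Nat.strong_induction_on with
    | _ l ihl =>
      intro C hCl hCk
      have hb : bndL d k0 G C = 0 := by rw [hbndG]; rfl
      rw [bndL_apply] at hb
      have hsum : (∑ u : Box d k0, if u = C then 0 else G s(C, u)) =
          G s(C, parentBox C) := by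
        rw [Finset.sum_eq_single (parentBox C)]
        · rw [if_neg (Ne.symm (ne_parentBox hCk))]
        · intro u _ hu
          by_cases h1 : u = C
          · rw [if_pos h1]
          · rw [if_neg h1]
            by_contra hne0
            have hD : ∃ D : Box d k0, D.level < k0 ∧ s(C, u) = s(D, parentBox D) := by
              by_contra hno
              push_neg at hno
              exact hne0 (hsupp _ hno)
            obtain ⟨D, hD1, hD2⟩ := hD
            rcases Sym2.eq_iff.mp hD2 with ⟨h2, h3⟩ | ⟨h2, h3⟩
            · exact hu (by rw [h3, ← h2])
            · have h4 : D.level + 1 = C.level := by rw [← parentBox_level hD1, ← h2]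
              have h5 : G s(D, parentBox D) = 0 := ihl D.level (by omega) D rfl hD1
              exact hne0 (by rw [show s(C, u) = s(D, parentBox D) from hD2, h5])
        · intro h
          exact absurd (Finset.mem_univ _) h
      rw [hsum] at hb
      exact hb
  have hGzero : G = 0 := by
    funext e
    rw [Pi.zero_apply]
    by_cases hcase : ∃ C : Box d k0, C.level < k0 ∧ e = s(C, parentBox C)
    · obtain ⟨C, h1, rfl⟩ := hcase
      exact hzero C.level C rfl h1
    · push_neg at hcase
      exact hsupp e hcase
  have hfin : chi H.edgeSet = ∑ s ∈ SL, y s := by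
    have h8 : ∀ x y : ZMod 2, x + y = 0 → x = y := by decide
    funext e
    have h9 := congrFun hGzero e
    rw [hG, Pi.add_apply, Pi.zero_apply] at h9
    exact h8 _ _ h9
  rw [hfin]
  exact Submodule.sum_mem _ hyspan

end S5


/-- The set `Γ` generates the cycle space of `𝓑` over `GF(2)`: the edge
set of every subgraph of `𝓑` in which all vertices have even degree lies in the
`GF(2)`-span of the edge sets of the members of `Γ` (i.e. it is a symmetric difference of
members of `Γ`).  Moreover, the vertex set of every member of `Γ` induces a clique
in `𝓖⁺`. -/
theorem statement_5 (d : ℕ) (hd : 1 ≤ d) (n k0 : ℕ) (D0 : ℝ) (hD0 : 0 < D0)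
    (hn : (n : ℝ) ^ ((1 : ℝ) / d) = D0 * 2 ^ k0) :
    (∀ H : SimpleGraph (Box d k0), H ≤ boxGraph d k0 D0 ((n : ℝ) ^ ((1 : ℝ) / d)) →
      (∀ v : Box d k0, Even {u | H.Adj v u}.ncard) →
      chi H.edgeSet ∈
        Submodule.span (ZMod 2)
          (chi '' gammaSet d k0 D0 ((n : ℝ) ^ ((1 : ℝ) / d)))) ∧
    (∀ E ∈ gammaSet d k0 D0 ((n : ℝ) ^ ((1 : ℝ) / d)), ∀ a b : Box d k0,
      (∃ e ∈ E, a ∈ e) → (∃ e ∈ E, b ∈ e) → a ≠ b →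
      (gPlusGraph d k0 D0 ((n : ℝ) ^ ((1 : ℝ) / d))).Adj a b) := by
  constructor
  · intro H hH heven
    exact S5.part1 hd hD0 hn H hH heven
  · intro E hE a b ha hb hab
    exact S5.gamma_clique hd hD0 hn hE a b ha hb hab
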